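/- arXiv:2512.13162 — 3 statements merged into one kernel-verified Lean document; each statement's English description precedes it below -/
import Mathlib

section
/- Let q be a prime power and let k, n, m be integers with 1 < k < n and m < n ≤ km. Set t = ⌊(km − n)/m⌋ and a = n − (k − t − 2)m. Then there exists a nondegenerate full weight spectrum (FWS) [n,k]_{q^m/q} rank-metric code, i.e., a nondegenerate [n,k]_{q^m/q} code C with WS(C) = {1, 2, …, m}, if and only if a < 2^{t+2}. -/
/-- The rank weight of a vector `v ∈ L^n`, where `L/K` is a field extension:
the `K`-dimension of the `K`-span of the entries of `v`. -/
noncomputable def rankWeight (K : Type*) [Field K] {L : Type*} [Field L] [Algebra K L]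
    {n : ℕ} (v : Fin n → L) : ℕ :=
  Module.finrank K (Submodule.span K (Set.range v))

/-- The weight spectrum of a rank-metric code `C ⊆ L^n`: the set of rank weights of its
nonzero codewords. -/
noncomputable def weightSpectrum (K : Type*) [Field K] {L : Type*} [Field L] [Algebra K L]
    {n : ℕ} (C : Submodule L (Fin n → L)) : Set ℕ :=
  {w | ∃ c ∈ C, c ≠ 0 ∧ rankWeight K c = w}

/-- A rank-metric code `C ⊆ L^n` is nondegenerate if for every nonzero `x ∈ K^n` there is a
codeword `c ∈ C` with `∑ j, x j • c j ≠ 0`. -/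
def IsNondegenerate (K : Type*) [Field K] {L : Type*} [Field L] [Algebra K L]
    {n : ℕ} (C : Submodule L (Fin n → L)) : Prop :=
  ∀ x : Fin n → K, x ≠ 0 → ∃ c ∈ C, (∑ j, x j • c j) ≠ 0


open Finset

lemma bits (u : ℕ) : ∀ w, w < 2 ^ u → ∃ T ⊆ Finset.range u, ∑ j ∈ T, 2 ^ j = w := by
  induction u with
  | zero => intro w hw; exact ⟨∅, by simp, by simpa using by omega⟩
  | succ u ih =>
    intro w hw
    rcases Nat.lt_or_ge w (2 ^ u) with h | h
    · obtain ⟨T, hT, hs⟩ := ih w h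
      exact ⟨T, hT.trans (by simp [Finset.range_subset_range]), hs⟩
    · have h2 : 2 ^ (u+1) = 2 ^ u * 2 := pow_succ 2 u
      obtain ⟨T, hT, hs⟩ := ih (w - 2 ^ u) (by omega)
      have hu : u ∉ T := fun hmem => by simpa using hT hmem
      refine ⟨insert u T, ?_, ?_⟩
      · intro x hx
        rcases Finset.mem_insert.mp hx with rfl | hx
        · exact Finset.self_mem_range_succ x
        · exact Finset.range_subset_range.mpr (Nat.le_succ u) (hT hx)
      · rw [Finset.sum_insert hu, hs]; omega

lemma trim (u : ℕ) : ∀ M, M ≤ 2 ^ u - 1 → ∀ d, d ≤ M →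
    ∃ T ⊆ Finset.range u, ∑ j ∈ T, (min (2 ^ (j+1) - 1) M - min (2 ^ j - 1) M) = d := by
  induction u with
  | zero => intro M hM d hd; exact ⟨∅, by simp, by simpa using by omega⟩
  | succ u ih =>
    intro M hM d hd
    have h2 : 2 ^ (u+1) = 2 ^ u * 2 := pow_succ 2 u
    rcases Nat.lt_or_ge M (2 ^ u) with h | h
    · -- δ_u = 0, and everything reduces to ih
      obtain ⟨T, hT, hs⟩ := ih M (by omega) d hd
      exact ⟨T, hT.trans (by simp [Finset.range_subset_range]), hs⟩
    · -- M ≥ 2^u : for j < u, δ_j = 2^j (full), δ_u = M - (2^u - 1)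
      have hfull : ∀ j < u, (min (2 ^ (j+1) - 1) M - min (2 ^ j - 1) M) = 2 ^ j := by
        intro j hj
        have hj1 : 2 ^ (j+1) ≤ 2 ^ u := Nat.pow_le_pow_right (by norm_num) (by omega)
        have hj2 : (1:ℕ) ≤ 2 ^ j := Nat.one_le_two_pow
        have hj3 : 2 ^ (j+1) = 2 ^ j * 2 := pow_succ 2 j
        omega
      rcases Nat.lt_or_ge d (2 ^ u) with hdlt | hdge
      · obtain ⟨T, hT, hs⟩ := bits u d hdlt
        refine ⟨T, hT.trans (by simp [Finset.range_subset_range]), ?_⟩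
        rw [← hs]
        exact Finset.sum_congr rfl (fun j hj => hfull j (Finset.mem_range.mp (hT hj)))
      · -- include index u
        have hj2 : (1:ℕ) ≤ 2 ^ u := Nat.one_le_two_pow
        have hδu : (min (2 ^ (u+1) - 1) M - min (2 ^ u - 1) M) = M - (2 ^ u - 1) := by
          omega
        have hb : d - (M - (2 ^ u - 1)) < 2 ^ u := by omega
        obtain ⟨T, hT, hs⟩ := bits u (d - (M - (2 ^ u - 1))) hb
        have hu : u ∉ T := fun hmem => by simpa using hT hmem
        refine ⟨insert u T, ?_, ?_⟩
        · intro x hx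
          rcases Finset.mem_insert.mp hx with rfl | hx
          · exact Finset.self_mem_range_succ x
          · exact Finset.range_subset_range.mpr (Nat.le_succ u) (hT hx)
        · rw [Finset.sum_insert hu, hδu]
          have : ∑ j ∈ T, (min (2 ^ (j+1) - 1) M - min (2 ^ j - 1) M) = d - (M - (2^u -1)) := by
            rw [← hs]
            exact Finset.sum_congr rfl (fun j hj => hfull j (Finset.mem_range.mp (hT hj)))
          have h1 : (1:ℕ) ≤ 2 ^ u := Nat.one_le_two_pow
          omega

/-- coin partition sizes: for r ≤ j ≤ m with m ≤ 2^j - 1, there exist j positive sizes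
summing to m whose subset sums cover [0,m]. -/
lemma coin : ∀ j m : ℕ, 1 ≤ j → j ≤ m → m ≤ 2 ^ j - 1 →
    ∃ s : ℕ → ℕ, (∀ i < j, 1 ≤ s i) ∧ (∀ i < j, s i ≤ m) ∧ ∑ i ∈ Finset.range j, s i = m ∧
      ∀ w ≤ m, ∃ T ⊆ Finset.range j, ∑ i ∈ T, s i = w := by
  intro j
  induction j with
  | zero => omega
  | succ j ih =>
    intro m h1 h2 h3
    rcases Nat.eq_or_lt_of_le h1 with h | h
    · -- j + 1 = 1, so m = 1
      have hj0 : j = 0 := by omega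
      subst hj0
      have hm1 : m = 1 := by norm_num at h3; omega
      subst hm1
      refine ⟨fun _ => 1, by simp, by intro i _; simp, by simp, ?_⟩
      intro w hw
      interval_cases w
      · exact ⟨∅, by simp, by simp⟩
      · exact ⟨{0}, by simp, by simp⟩
    · -- j ≥ 1
      have hj1 : 1 ≤ j := by omega
      set m' : ℕ := min (2 ^ j - 1) (m - 1) with hm'
      have h2j : 2 ^ (j+1) = 2 ^ j * 2 := pow_succ 2 j
      have h1j : (1:ℕ) ≤ 2 ^ j := Nat.one_le_two_pow
      have hjle : j ≤ 2 ^ j - 1 := by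
        clear * - hj1
        induction j with
        | zero => simp
        | succ j ih =>
          have h2j : 2 ^ (j+1) = 2 ^ j * 2 := pow_succ 2 j
          have h1j : (1:ℕ) ≤ 2 ^ j := Nat.one_le_two_pow
          rcases Nat.eq_zero_or_pos j with rfl | hj
          · simp
          · have := ih hj; omega
      have hc1 : 1 ≤ j → j ≤ m' := by intro _; omega
      obtain ⟨s, hpos, hle, hsum, hcov⟩ := ih m' hj1 (hc1 hj1) (by omega)
      set c : ℕ := m - m' with hc
      have hc1' : 1 ≤ c := by omega
      have hcm : c ≤ m' + 1 := by omega
      refine ⟨fun i => if i = j then c else s i, ?_, ?_, ?_, ?_⟩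
      · intro i hi
        by_cases hij : i = j
        · simp [hij]; omega
        · simpa [hij] using hpos i (by omega)
      · intro i hi
        by_cases hij : i = j
        · simp [hij]; omega
        · have := hle i (by omega); simp [hij]; omega
      · rw [Finset.sum_range_succ, if_pos rfl]
        have : ∑ i ∈ Finset.range j, (if i = j then c else s i) = ∑ i ∈ Finset.range j, s i := by
          refine Finset.sum_congr rfl fun i hi => ?_
          have : i ≠ j := by have := Finset.mem_range.mp hi; omega
          simp [this]
        omega
      · intro w hw
        rcases le_or_gt w m' with hwm | hwm
        · obtain ⟨T, hT, hs⟩ := hcov w hwm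
          refine ⟨T, hT.trans (by simp [Finset.range_subset_range]), ?_⟩
          rw [← hs]
          refine Finset.sum_congr rfl fun i hi => ?_
          have : i ≠ j := by have := Finset.mem_range.mp (hT hi); omega
          simp [this]
        · -- w > m' : use c plus cover of w - c
          obtain ⟨T, hT, hs⟩ := hcov (w - c) (by omega)
          have hjT : j ∉ T := fun hmem => by simpa using hT hmem
          refine ⟨insert j T, ?_, ?_⟩
          · intro x hx
            rcases Finset.mem_insert.mp hx with rfl | hx
            · exact Finset.self_mem_range_succ x
            · exact Finset.range_subset_range.mpr (Nat.le_succ j) (hT hx)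
          · rw [Finset.sum_insert hjT, if_pos rfl]
            have : ∑ i ∈ T, (if i = j then c else s i) = w - c := by
              rw [← hs]
              refine Finset.sum_congr rfl fun i hi => ?_
              have : i ≠ j := by have := Finset.mem_range.mp (hT hi); omega
              simp [this]
            omega

open Finset

-- intervals inside Fin m
def iv (m lo hi : ℕ) : Finset (Fin m) :=
  (Finset.Ico lo (min hi m)).attachFin (fun a ha => by
    have := Finset.mem_Ico.mp ha; omega)

lemma mem_iv {m lo hi : ℕ} {a : Fin m} : a ∈ iv m lo hi ↔ lo ≤ a.val ∧ a.val < min hi m := by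
  simp [iv, Finset.mem_attachFin, Finset.mem_Ico]

lemma card_iv (m lo hi : ℕ) : (iv m lo hi).card = min hi m - lo := by
  simp [iv, Finset.card_attachFin, Nat.card_Ico]

lemma iv_disjoint {m lo hi lo' hi' : ℕ} (h : hi ≤ lo' ∨ hi' ≤ lo) :
    Disjoint (iv m lo hi) (iv m lo' hi') := by
  rw [Finset.disjoint_left]
  intro a ha ha'
  rw [mem_iv] at ha ha'
  omega

lemma sum_pow2 (u : ℕ) : ∑ i ∈ Finset.range u, 2 ^ i = 2 ^ u - 1 := by
  induction u with
  | zero => simp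
  | succ u ih =>
    rw [Finset.sum_range_succ, ih]
    have h2 : 2 ^ (u+1) = 2 ^ u * 2 := pow_succ 2 u
    have h1 : (1:ℕ) ≤ 2 ^ u := Nat.one_le_two_pow
    omega

lemma coin_design (k m : ℕ) (hm : 1 ≤ m) (hkm : k ≤ m) (hk : 1 ≤ k) (hmk : m ≤ 2 ^ k - 1) :
    ∃ A : Fin k → Finset (Fin m), (∀ i, (A i).Nonempty) ∧ (∑ i, (A i).card) = m ∧
      ∀ w, 1 ≤ w → w ≤ m → ∃ S : Finset (Fin k), (S.biUnion A).card = w := by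
  obtain ⟨s, hpos, hle, hsum, hcov⟩ := coin k m hk hkm hmk
  set P : ℕ → ℕ := fun j => ∑ l ∈ Finset.range j, s l with hP
  have hPmono : ∀ {i j}, i ≤ j → P i ≤ P j := by
    intro i j hij
    exact Finset.sum_le_sum_of_subset (Finset.range_subset_range.mpr hij)
  have hPk : P k = m := hsum
  have hPsucc : ∀ j, P (j+1) = P j + s j := fun j => Finset.sum_range_succ s j
  set A : Fin k → Finset (Fin m) := fun i => iv m (P i.val) (P (i.val + 1)) with hA
  have hcard : ∀ i : Fin k, (A i).card = s i.val := by
    intro i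
    rw [hA, card_iv]
    have h1 : P (i.val + 1) ≤ m := hPk ▸ hPmono (by omega)
    have h2 := hPsucc i.val
    omega
  have hdisj : ∀ i ∈ (univ : Finset (Fin k)), ∀ j ∈ (univ : Finset (Fin k)), i ≠ j →
      Disjoint (A i) (A j) := by
    intro i _ j _ hij
    rcases Nat.lt_or_ge i.val j.val with h | h
    · exact iv_disjoint (Or.inl (hPmono (by omega)))
    · have : j.val < i.val := by
        rcases Nat.lt_or_ge j.val i.val with h' | h'
        · exact h'
        · exact absurd (Fin.ext (by omega)) hij
      exact iv_disjoint (Or.inr (hPmono (by omega)))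
  refine ⟨A, ?_, ?_, ?_⟩
  · intro i
    rw [← Finset.card_pos, hcard]
    exact hpos i.val i.isLt
  · calc ∑ i, (A i).card = ∑ i : Fin k, s i.val :=
          Finset.sum_congr rfl (fun i _ => hcard i)
      _ = ∑ j ∈ Finset.range k, s j := Fin.sum_univ_eq_sum_range (fun j => s j) k
      _ = m := hsum
  · intro w hw1 hw2
    obtain ⟨T, hT, hTs⟩ := hcov w hw2
    refine ⟨univ.filter (fun i : Fin k => i.val ∈ T), ?_⟩
    rw [Finset.card_biUnion (fun i hi j hj hij => hdisj i (Finset.mem_univ i) j (Finset.mem_univ j) hij)]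
    rw [Finset.sum_filter]
    have : ∀ i : Fin k, (if i.val ∈ T then (A i).card else 0) = (if i.val ∈ T then s i.val else 0) := by
      intro i; by_cases h : i.val ∈ T <;> simp [h, hcard]
    rw [Finset.sum_congr rfl (fun i _ => this i)]
    rw [Fin.sum_univ_eq_sum_range (fun j => if j ∈ T then s j else 0) k]
    rw [Finset.sum_ite_mem]
    rwa [Finset.inter_eq_right.mpr hT]

lemma overlap_design (r m n : ℕ) (hm : 2 ≤ m) (hr1 : 2 ^ (r-1) ≤ m) (hr2 : m < 2 ^ r)
    (hmn : m ≤ n) (hn : n ≤ 2 ^ r - 1) :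
    ∃ A : Fin r → Finset (Fin m), (∀ i, (A i).Nonempty) ∧ (∑ i, (A i).card) = n ∧
      ∀ w, 1 ≤ w → w ≤ m → ∃ S : Finset (Fin r), (S.biUnion A).card = w := by
  have hrr : 2 ≤ r := by
    by_contra h
    push_neg at h
    interval_cases r <;> simp_all <;> omega
  have hpow : ∀ j, 2 ^ (j+1) = 2 ^ j * 2 := fun j => pow_succ 2 j
  have hrpow : 2 ^ r = 2 ^ (r-1) * 2 := by
    have := pow_succ 2 (r-1)
    have he : r - 1 + 1 = r := by omega
    rw [he] at this
    exact this
  set p : ℕ := n - (2 ^ (r-1) - 1) with hp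
  have h1p : 1 ≤ p := by
    have h1 : (1:ℕ) ≤ 2 ^ (r-1) := Nat.one_le_two_pow
    omega
  have hp2 : p ≤ 2 ^ (r-1) := by omega
  have hpm : p ≤ m := le_trans hp2 hr1
  set M : ℕ := m - p with hM
  have hM2 : M ≤ 2 ^ (r-1) - 1 := by omega
  -- bound for the binary intervals
  have hbd : ∀ j, j < r - 1 → 2 ^ (j+1) - 1 ≤ m := by
    intro j hj
    have : 2 ^ (j+1) ≤ 2 ^ (r-1) := Nat.pow_le_pow_right (by norm_num) (by omega)
    omega
  set A : Fin r → Finset (Fin m) := fun i =>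
    if i.val = r - 1 then iv m 0 p
    else iv m (m - (2 ^ (i.val+1) - 1)) (m - (2 ^ i.val - 1)) with hA
  have hcardB : ∀ j, j < r - 1 →
      (iv m (m - (2 ^ (j+1) - 1)) (m - (2 ^ j - 1))).card = 2 ^ j := by
    intro j hj
    rw [card_iv]
    have h1 := hbd j hj
    have h2 := hpow j
    have h3 : (1:ℕ) ≤ 2 ^ j := Nat.one_le_two_pow
    omega
  have hcardA : ∀ i : Fin r, (A i).card = if i.val = r - 1 then p else 2 ^ i.val := by
    intro i
    by_cases h : i.val = r - 1
    · have hAi : A i = iv m 0 p := by simp only [hA]; rw [if_pos h]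
      rw [hAi, if_pos h, card_iv]; omega
    · have hAi : A i = iv m (m - (2 ^ (i.val+1) - 1)) (m - (2 ^ i.val - 1)) := by
        simp only [hA]; rw [if_neg h]
      rw [hAi, if_neg h]
      exact hcardB i.val (by omega)
  have hdisjB : ∀ j j', j < r - 1 → j' < r - 1 → j ≠ j' →
      Disjoint (iv m (m - (2 ^ (j+1) - 1)) (m - (2 ^ j - 1)))
        (iv m (m - (2 ^ (j'+1) - 1)) (m - (2 ^ j' - 1))) := by
    intro j j' hj hj' hne
    rcases Nat.lt_or_ge j j' with h | h
    · refine iv_disjoint (Or.inr ?_)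
      have h1 : 2 ^ (j+1) ≤ 2 ^ j' := Nat.pow_le_pow_right (by norm_num) (by omega)
      have h2 := hbd j hj
      have h3 := hbd j' hj'
      have h4 : (1:ℕ) ≤ 2 ^ j' := Nat.one_le_two_pow
      omega
    · refine iv_disjoint (Or.inl ?_)
      have h1 : 2 ^ (j'+1) ≤ 2 ^ j := Nat.pow_le_pow_right (by norm_num) (by omega)
      have h2 := hbd j hj
      have h3 := hbd j' hj'
      have h4 : (1:ℕ) ≤ 2 ^ j := Nat.one_le_two_pow
      omega
  have hdisjA : ∀ i j : Fin r, i.val ≠ r - 1 → j.val ≠ r - 1 → i ≠ j → Disjoint (A i) (A j) := by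
    intro i j hi hj hij
    have hAi : A i = iv m (m - (2 ^ (i.val+1) - 1)) (m - (2 ^ i.val - 1)) := by
      simp only [hA]; rw [if_neg hi]
    have hAj : A j = iv m (m - (2 ^ (j.val+1) - 1)) (m - (2 ^ j.val - 1)) := by
      simp only [hA]; rw [if_neg hj]
    rw [hAi, hAj]
    exact hdisjB i.val j.val (by omega) (by omega) (fun h => hij (Fin.ext h))
  refine ⟨A, ?_, ?_, ?_⟩
  · intro i
    rw [← Finset.card_pos, hcardA]
    by_cases h : i.val = r - 1
    · rw [if_pos h]; omega
    · simp only [if_neg h]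
      exact pow_pos (by norm_num) _
  · rw [Finset.sum_congr rfl (fun i _ => hcardA i)]
    rw [Fin.sum_univ_eq_sum_range (fun j => if j = r - 1 then p else 2 ^ j) r]
    have hre : r = (r - 1) + 1 := by omega
    have hsplit : ∑ j ∈ Finset.range r, (if j = r - 1 then p else 2 ^ j)
        = (∑ j ∈ Finset.range (r-1), (if j = r - 1 then p else 2 ^ j))
          + (if r - 1 = r - 1 then p else 2 ^ (r-1)) := by
      conv_lhs => rw [hre]
      exact Finset.sum_range_succ _ _
    rw [hsplit, if_pos rfl]
    have : ∑ j ∈ Finset.range (r-1), (if j = r - 1 then p else 2 ^ j)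
        = ∑ j ∈ Finset.range (r-1), 2 ^ j := by
      refine Finset.sum_congr rfl fun j hj => ?_
      have := Finset.mem_range.mp hj
      rw [if_neg (by omega)]
    rw [this, sum_pow2]
    omega
  · intro w hw1 hw2
    rcases Nat.lt_or_ge w p with hwp | hwp
    · -- small w : binary digits, only B sets
      obtain ⟨T, hT, hTs⟩ := bits (r-1) w (by omega)
      refine ⟨univ.filter (fun i : Fin r => i.val ∈ T), ?_⟩
      have hmem : ∀ i : Fin r, i.val ∈ T → i.val < r - 1 :=
        fun i hi => Finset.mem_range.mp (hT hi)
      rw [Finset.card_biUnion]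
      · rw [Finset.sum_filter]
        have : ∀ i : Fin r, (if i.val ∈ T then (A i).card else 0)
            = (if i.val ∈ T then 2 ^ i.val else 0) := by
          intro i
          by_cases h : i.val ∈ T
          · have := hmem i h
            rw [if_pos h, if_pos h, hcardA, if_neg (by omega)]
          · simp [h]
        rw [Finset.sum_congr rfl (fun i _ => this i)]
        rw [Fin.sum_univ_eq_sum_range (fun j => if j ∈ T then 2 ^ j else 0) r]
        rw [Finset.sum_ite_mem]
        rw [Finset.inter_eq_right.mpr (hT.trans (Finset.range_subset_range.mpr (by omega)))]
        exact hTs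
      · intro i hi j hj hij
        have hiT := hmem i (by simpa using hi)
        have hjT := hmem j (by simpa using hj)
        exact hdisjA i j (by omega) (by omega) hij
    · -- large w : prefix plus trimmed binaries
      obtain ⟨T, hT, hTs⟩ := trim (r-1) M hM2 (w - p) (by omega)
      have hmem : ∀ i : Fin r, i.val ∈ T → i.val < r - 1 :=
        fun i hi => Finset.mem_range.mp (hT hi)
      refine ⟨insert ⟨r-1, by omega⟩ (univ.filter (fun i : Fin r => i.val ∈ T)), ?_⟩
      rw [Finset.biUnion_insert]
      have hAlast : A ⟨r-1, by omega⟩ = iv m 0 p := by simp [hA]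
      set X : Finset (Fin m) := (univ.filter (fun i : Fin r => i.val ∈ T)).biUnion A with hX
      rw [hAlast]
      -- card (P ∪ X) = p + card (X \ P)
      have hcup : (iv m 0 p ∪ X).card = p + (X \ iv m 0 p).card := by
        rw [← Finset.union_sdiff_self_eq_union]
        rw [Finset.card_union_of_disjoint Finset.disjoint_sdiff]
        congr 1
        rw [card_iv]; omega
      rw [hcup]
      -- X \ P as biUnion of (A i \ P)
      have hXP : X \ iv m 0 p = (univ.filter (fun i : Fin r => i.val ∈ T)).biUnion
          (fun i => A i \ iv m 0 p) := by
        ext a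
        simp only [Finset.mem_sdiff, hX, Finset.mem_biUnion]
        tauto
      rw [hXP]
      rw [Finset.card_biUnion]
      · have hsd : ∀ i : Fin r, i.val ∈ T →
            (A i \ iv m 0 p).card
              = min (2 ^ (i.val+1) - 1) M - min (2 ^ i.val - 1) M := by
          intro i hi
          have hilt := hmem i hi
          have hAi : A i = iv m (m - (2 ^ (i.val+1) - 1)) (m - (2 ^ i.val - 1)) := by
            rw [hA]; exact if_neg (by omega)
          have hsdiff : A i \ iv m 0 p
              = iv m (max (m - (2 ^ (i.val+1) - 1)) p) (m - (2 ^ i.val - 1)) := by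
            rw [hAi]
            ext a
            simp only [Finset.mem_sdiff, mem_iv]
            omega
          rw [hsdiff, card_iv]
          have h1 := hbd i.val hilt
          have h2 := hpow i.val
          have h3 : (1:ℕ) ≤ 2 ^ i.val := Nat.one_le_two_pow
          omega
        rw [Finset.sum_congr rfl (fun i hi => hsd i (by simpa using hi))]
        rw [Finset.sum_filter]
        rw [Fin.sum_univ_eq_sum_range
          (fun j => if j ∈ T then min (2 ^ (j+1) - 1) M - min (2 ^ j - 1) M else 0) r]
        rw [Finset.sum_ite_mem]
        rw [Finset.inter_eq_right.mpr (hT.trans (Finset.range_subset_range.mpr (by omega)))]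
        omega
      · intro i hi j hj hij
        have hiT := hmem i (by simpa using hi)
        have hjT := hmem j (by simpa using hj)
        exact Disjoint.mono sdiff_le sdiff_le
          (hdisjA i j (by omega) (by omega) hij)

lemma design_master (r m : ℕ) (hm : 2 ≤ m) (hr1 : 2 ^ (r-1) ≤ m) (hr2 : m < 2 ^ r) :
    ∀ k n, r ≤ k → k ≤ n → m ≤ n → n ≤ (k - r) * m + (2 ^ r - 1) →
    ∃ A : Fin k → Finset (Fin m), (∀ i, (A i).Nonempty) ∧ (∑ i, (A i).card) = n ∧
      ∀ w, 1 ≤ w → w ≤ m → ∃ S : Finset (Fin k), (S.biUnion A).card = w := by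
  have hr0 : 1 ≤ r := by
    by_contra h
    push_neg at h
    interval_cases r
    simp at hr2
    omega
  intro k
  induction k with
  | zero => intro n hrk; omega
  | succ k ih =>
    intro n hrk hkn hmn hub
    by_cases hnm : n = m
    · subst hnm
      have h2 : (2:ℕ) ^ r ≤ 2 ^ (k+1) := Nat.pow_le_pow_right (by norm_num) hrk
      exact coin_design (k+1) n (by omega) hkn (by omega) (by omega)
    · have hnm' : m < n := by omega
      by_cases hkr : k + 1 = r
      · subst hkr
        have hub' : n ≤ 2 ^ (k+1) - 1 := by
          have : (k + 1 - (k+1)) * m = 0 := by simp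
          omega
        exact overlap_design (k+1) m n hm hr1 hr2 hmn hub'
      · have hrk' : r ≤ k := by omega
        set c : ℕ := max 1 (n - ((k - r) * m + (2 ^ r - 1))) with hc
        have hmul : (k + 1 - r) * m = (k - r) * m + m := by
          have h1 : k + 1 - r = (k - r) + 1 := by omega
          rw [h1]; ring
        have hcm : c ≤ m := by omega
        have h1c : 1 ≤ c := le_max_left _ _
        have hrle : r ≤ 2 ^ r - 1 := by
          have := @Nat.lt_two_pow_self r
          omega
        have hkler : k - r ≤ (k - r) * m := Nat.le_mul_of_pos_right _ (by omega)
        set n' : ℕ := n - c with hn'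
        have hcond1 : k ≤ n' := by omega
        have hcond2 : m ≤ n' := by omega
        have hcond3 : n' ≤ (k - r) * m + (2 ^ r - 1) := by omega
        obtain ⟨A0, hne0, hsum0, hcov0⟩ := ih n' hrk' hcond1 hcond2 hcond3
        set A : Fin (k+1) → Finset (Fin m) := fun i =>
          if h : (i : ℕ) < k then A0 ⟨i, h⟩ else iv m 0 c with hA
        have hAcast : ∀ i : Fin k, A i.castSucc = A0 i := by
          intro i
          simp only [hA]
          rw [dif_pos (by simpa using i.isLt)]
          exact congrArg A0 (Fin.ext (by simp))
        have hAlast : A (Fin.last k) = iv m 0 c := by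
          simp only [hA]
          rw [dif_neg (by simp)]
        refine ⟨A, ?_, ?_, ?_⟩
        · intro i
          refine Fin.lastCases ?_ (fun j => ?_) i
          · rw [hAlast, ← Finset.card_pos, card_iv]; omega
          · rw [hAcast]; exact hne0 j
        · rw [Fin.sum_univ_castSucc]
          rw [Finset.sum_congr rfl (fun i _ => by rw [hAcast i]), hsum0, hAlast, card_iv]
          omega
        · intro w hw1 hw2
          obtain ⟨S0, hS0⟩ := hcov0 w hw1 hw2
          refine ⟨S0.image Fin.castSucc, ?_⟩
          have : (S0.image Fin.castSucc).biUnion A = S0.biUnion A0 := by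
            ext a
            simp only [Finset.mem_biUnion, Finset.mem_image]
            constructor
            · rintro ⟨i, ⟨j, hj, rfl⟩, hai⟩
              exact ⟨j, hj, by rwa [hAcast] at hai⟩
            · rintro ⟨j, hj, haj⟩
              exact ⟨j.castSucc, ⟨j, hj, rfl⟩, by rwa [hAcast]⟩
          rw [this, hS0]

lemma arith_iff (m n k t a : ℕ)
    (hk : 1 < k) (hkn : k < n) (hmn : m < n) (hkm : n ≤ k * m)
    (ht : t = (k * m - n) / m) (ha : a = n - (k - t - 2) * m) :
    a < 2 ^ (t + 2) ↔ (Nat.log 2 m + 1 ≤ k ∧ n ≤ (k - (Nat.log 2 m + 1)) * m + (2 ^ (Nat.log 2 m + 1) - 1)) := by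
  set r := Nat.log 2 m + 1 with hrdef
  have hm2 : 2 ≤ m := by
    rcases Nat.lt_or_ge m 2 with h | h
    · interval_cases m <;> omega
    · exact h
  have hm0 : m ≠ 0 := by omega
  have hr1 : 2 ^ (r - 1) ≤ m := by
    simpa [hrdef] using Nat.pow_log_le_self 2 hm0
  have hr2 : m < 2 ^ r := by
    simpa [hrdef] using Nat.lt_pow_succ_log_self (by norm_num) m
  have hr_ge1 : 1 ≤ r := by omega
  -- set up s'' and d
  set s : ℕ := (k * m - n) % m with hs
  have htm : t * m + s = k * m - n := by
    rw [ht, hs, Nat.div_add_mod'] 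
  have hslt : s < m := Nat.mod_lt _ (by omega)
  have htk : t < k := by
    by_contra h
    push_neg at h
    have : k * m ≤ t * m := Nat.mul_le_mul_right m h
    omega
  set d : ℕ := k - t with hd
  have hdk : k = t + d := by omega
  have hdm : n + s = d * m := by
    have h1 : k * m = t * m + d * m := by
      rw [hdk]; ring
    omega
  have hd2 : 2 ≤ d := by
    by_contra h
    push_neg at h
    interval_cases d <;> omega
  have ha2 : a = 2 * m - s := by
    have h1 : k - t - 2 = d - 2 := by omega
    have h2 : (d - 2) * m + 2 * m = d * m := by
      have : (d - 2) + 2 = d := by omega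
      calc (d-2) * m + 2 * m = ((d-2) + 2) * m := by ring
        _ = d * m := by rw [this]
    omega
  constructor
  · rintro h1
    rcases Nat.lt_or_ge t (r - 1) with hc | hc
    · -- t ≤ r - 2; rule out t ≤ r - 3
      have htr2 : t = r - 2 := by
        by_contra hne
        have h3 : t + 3 ≤ r := by omega
        have : (2:ℕ) ^ (t + 2) ≤ 2 ^ (r - 1) := Nat.pow_le_pow_right (by norm_num) (by omega)
        omega
      have h2r : 2 ^ (t+2) = 2 ^ r := by rw [htr2]; congr 1; omega
      refine ⟨by omega, ?_⟩
      have hkr : k - r = d - 2 := by omega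
      rw [hkr]
      have h2 : (d - 2) * m + 2 * m = d * m := by
        have : (d - 2) + 2 = d := by omega
        calc (d-2) * m + 2 * m = ((d-2) + 2) * m := by ring
          _ = d * m := by rw [this]
      omega
    · rcases Nat.lt_or_ge t r with hc2 | hc2
      · -- t = r - 1
        have htr : t = r - 1 := by omega
        refine ⟨by omega, ?_⟩
        have hkr : k - r = d - 1 := by omega
        rw [hkr]
        have h2 : (d - 1) * m + m = d * m := by
          have : (d - 1) + 1 = d := by omega
          calc (d-1) * m + m = ((d-1) + 1) * m := by ring
            _ = d * m := by rw [this]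
        omega
      · -- t ≥ r
        refine ⟨by omega, ?_⟩
        have : d * m ≤ (k - r) * m := Nat.mul_le_mul_right m (by omega)
        omega
  · rintro ⟨hrk, h2⟩
    rcases Nat.lt_or_ge t (r - 1) with hc | hc
    · -- t ≤ r - 2: first rule out t ≤ r - 3
      have htr2 : t = r - 2 := by
        by_contra hne
        have h3 : t + 3 ≤ r := by omega
        -- k - r ≤ d - 3
        have hkr : k - r ≤ d - 3 := by omega
        have hmul : (k - r) * m ≤ (d - 3) * m := Nat.mul_le_mul_right m hkr
        have h4 : (d - 3) * m + 3 * m = d * m := by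
          have : (d - 3) + 3 = d := by omega
          calc (d-3) * m + 3 * m = ((d-3) + 3) * m := by ring
            _ = d * m := by rw [this]
        -- from h2 : n ≤ (k-r)m + 2^r - 1, get 3m ≤ 2^r - 1 + s
        have h5 : 3 * m ≤ 2 ^ r - 1 + s := by omega
        have h6 : 2 ^ r ≤ 2 * m := by
          have hre : r - 1 + 1 = r := by omega
          have h2p : 2 ^ (r - 1 + 1) = 2 ^ (r-1) * 2 := pow_succ 2 (r-1)
          rw [hre] at h2p
          omega
        omega
      have h2r : 2 ^ (t+2) = 2 ^ r := by rw [htr2]; congr 1; omega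
      have hkr : k - r = d - 2 := by omega
      rw [hkr] at h2
      have h3 : (d - 2) * m + 2 * m = d * m := by
        have : (d - 2) + 2 = d := by omega
        calc (d-2) * m + 2 * m = ((d-2) + 2) * m := by ring
          _ = d * m := by rw [this]
      omega
    · -- t ≥ r - 1 : a ≤ 2m < 2^{r+1} ≤ 2^{t+2}
      have h6 : 2 * m < 2 ^ (r + 1) := by
        have h2p : 2 ^ (r + 1) = 2 ^ r * 2 := pow_succ 2 r
        omega
      have h7 : (2:ℕ) ^ (r + 1) ≤ 2 ^ (t + 2) := Nat.pow_le_pow_right (by norm_num) (by omega)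
      omega

section WeightLemmas

variable {K L : Type*} [Field K] [Field L] [Algebra K L] {n : ℕ}

lemma rankWeight_le [FiniteDimensional K L] (v : Fin n → L) :
    rankWeight K v ≤ Module.finrank K L :=
  Submodule.finrank_le _

lemma rankWeight_pos [FiniteDimensional K L] {v : Fin n → L} (hv : v ≠ 0) :
    1 ≤ rankWeight K v := by
  have : ∃ j, v j ≠ 0 := by
    by_contra h
    push_neg at h
    exact hv (funext fun j => h j)
  obtain ⟨j, hj⟩ := this
  have hnt : Nontrivial ↥(Submodule.span K (Set.range v)) := by
    refine ⟨⟨⟨v j, Submodule.subset_span (Set.mem_range_self j)⟩, 0, ?_⟩⟩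
    simp [Subtype.ext_iff, hj]
  have h := Module.finrank_pos_iff (R := K) (M := ↥(Submodule.span K (Set.range v))) |>.mpr hnt
  rw [rankWeight]
  omega

lemma rankWeight_zero : rankWeight K (0 : Fin n → L) = 0 := by
  have hsp : Submodule.span K (Set.range (0 : Fin n → L)) = ⊥ := by
    rw [Submodule.span_eq_bot]
    rintro x ⟨j, rfl⟩
    rfl
  rw [rankWeight, hsp, finrank_bot]

lemma rankWeight_add_le [FiniteDimensional K L] (u v : Fin n → L) :
    rankWeight K (u + v) ≤ rankWeight K u + rankWeight K v := by
  have hle : Submodule.span K (Set.range (u + v)) ≤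
      Submodule.span K (Set.range u) ⊔ Submodule.span K (Set.range v) := by
    rw [Submodule.span_le]
    rintro x ⟨j, rfl⟩
    have h1 : u j ∈ Submodule.span K (Set.range u) :=
      Submodule.subset_span (Set.mem_range_self j)
    have h2 : v j ∈ Submodule.span K (Set.range v) :=
      Submodule.subset_span (Set.mem_range_self j)
    exact Submodule.add_mem_sup h1 h2
  have h3 := Submodule.finrank_mono hle
  have h4 := Submodule.finrank_sup_add_finrank_inf_eq
    (Submodule.span K (Set.range u)) (Submodule.span K (Set.range v))
  simp only [rankWeight]
  omega

lemma rankWeight_smul_le [FiniteDimensional K L] (a : L) (v : Fin n → L) :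
    rankWeight K (a • v) ≤ rankWeight K v := by
  have hfun : a • v = (fun x => a * x) ∘ v := by
    funext j; simp [smul_eq_mul]
  have hr : Set.range (a • v) = (LinearMap.mulLeft K a) '' Set.range v := by
    rw [hfun, Set.range_comp]; rfl
  rw [rankWeight, rankWeight, hr, Submodule.span_image]
  exact Submodule.finrank_map_le _ _

lemma rankWeight_finset_sum_le [FiniteDimensional K L] {ι : Type*} (s : Finset ι)
    (g : ι → Fin n → L) :
    rankWeight K (∑ i ∈ s, g i) ≤ ∑ i ∈ s, rankWeight K (g i) := by
  classical
  induction s using Finset.cons_induction with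
  | empty => simp [rankWeight_zero]
  | cons i s hi ih =>
    rw [Finset.sum_cons, Finset.sum_cons]
    exact le_trans (rankWeight_add_le _ _) (by omega)

lemma rankWeight_mem_span_le [FiniteDimensional K L] {ι : Type*} [Fintype ι]
    {g : ι → Fin n → L} {c : Fin n → L} (hc : c ∈ Submodule.span L (Set.range g)) :
    rankWeight K c ≤ ∑ i, rankWeight K (g i) := by
  rw [Submodule.mem_span_range_iff_exists_fun L] at hc
  obtain ⟨lam, rfl⟩ := hc
  refine le_trans (rankWeight_finset_sum_le Finset.univ _) ?_
  exact Finset.sum_le_sum fun i _ => rankWeight_smul_le _ _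

end WeightLemmas

section Construction

variable {K L : Type*} [Field K] [Field L] [Algebra K L]

lemma construction {m n k : ℕ}
    (hdeg : Module.finrank K L = m) (hm : 1 ≤ m) (hk : 1 ≤ k)
    (A : Fin k → Finset (Fin m)) (hne : ∀ i, (A i).Nonempty)
    (hsum : ∑ i, (A i).card = n)
    (hcov : ∀ w, 1 ≤ w → w ≤ m → ∃ S : Finset (Fin k), (S.biUnion A).card = w) :
    ∃ C : Submodule L (Fin n → L), Module.finrank L C = k ∧ IsNondegenerate K C ∧
      weightSpectrum K C = Set.Icc 1 m := by
  classical
  haveI : FiniteDimensional K L := Module.finite_of_finrank_pos (by omega)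
  set e : Module.Basis (Fin m) K L := (Module.finBasis K L).reindex (finCongr hdeg) with he
  have hcardT : Fintype.card ((i : Fin k) × {a : Fin m // a ∈ A i}) = n := by
    rw [Fintype.card_sigma]
    rw [← hsum]
    exact Finset.sum_congr rfl fun i _ => Fintype.card_coe (A i)
  set f : Fin n ≃ (i : Fin k) × {a : Fin m // a ∈ A i} :=
    (Fintype.equivFinOfCardEq hcardT).symm with hf
  set g : Fin k → Fin n → L := fun i j => if (f j).1 = i then e (f j).2.val else 0 with hg
  -- linear independence of the rows
  have hgind : LinearIndependent L g := by
    rw [Fintype.linearIndependent_iff]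
    intro xc hx0 i0
    obtain ⟨a0, ha0⟩ := hne i0
    set j0 : Fin n := f.symm ⟨i0, ⟨a0, ha0⟩⟩ with hj0
    have hfj0 : f j0 = ⟨i0, ⟨a0, ha0⟩⟩ := f.apply_symm_apply _
    have h1 := congrFun hx0 j0
    rw [Finset.sum_apply] at h1
    simp only [Pi.zero_apply] at h1
    have h2 : ∀ i : Fin k, (xc i • g i) j0 = if i0 = i then xc i * e a0 else 0 := by
      intro i
      show xc i * (if (f j0).1 = i then e (f j0).2.val else 0) = _
      rw [hfj0]
      show xc i * (if i0 = i then e a0 else 0) = _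
      by_cases h : i0 = i
      · rw [if_pos h, if_pos h]
      · rw [if_neg h, if_neg h, mul_zero]
    rw [Finset.sum_congr rfl (fun i _ => h2 i), Finset.sum_ite_eq] at h1
    rw [if_pos (Finset.mem_univ i0)] at h1
    rcases mul_eq_zero.mp h1 with h | h
    · exact h
    · exact absurd h (e.ne_zero a0)
  refine ⟨Submodule.span L (Set.range g), ?_, ?_, ?_⟩
  · rw [finrank_span_eq_card hgind, Fintype.card_fin]
  · -- nondegeneracy
    intro x hx
    obtain ⟨j0, hj0⟩ : ∃ j, x j ≠ 0 := by
      by_contra h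
      push_neg at h
      exact hx (funext fun j => h j)
    refine ⟨g (f j0).1, Submodule.subset_span (Set.mem_range_self _), ?_⟩
    set i0 := (f j0).1 with hi0
    have hstep1 : ∑ j, x j • g i0 j
        = ∑ d : (i : Fin k) × {a : Fin m // a ∈ A i},
            x (f.symm d) • (if d.1 = i0 then e d.2.val else 0) := by
      rw [← Equiv.sum_comp f
        (fun d => x (f.symm d) • (if d.1 = i0 then e d.2.val else 0))]
      refine Finset.sum_congr rfl fun j _ => ?_
      rw [Equiv.symm_apply_apply]
    have hstep2 : ∑ d : (i : Fin k) × {a : Fin m // a ∈ A i},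
            x (f.symm d) • (if d.1 = i0 then e d.2.val else 0)
        = ∑ a : {a : Fin m // a ∈ A i0}, x (f.symm ⟨i0, a⟩) • e a.val := by
      rw [← Finset.univ_sigma_univ, Finset.sum_sigma]
      rw [Finset.sum_eq_single i0]
      · refine Finset.sum_congr rfl fun a _ => ?_
        rw [if_pos rfl]
      · intro i _ hii0
        refine Finset.sum_eq_zero fun a _ => ?_
        rw [if_neg hii0, smul_zero]
      · intro h
        exact absurd (Finset.mem_univ i0) h
    intro hcontra
    rw [hstep1, hstep2] at hcontra
    -- linear independence of the basis vectors indexed by A i0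
    have hind : LinearIndependent K (fun a : {a : Fin m // a ∈ A i0} => e a.val) :=
      e.linearIndependent.comp _ Subtype.val_injective
    rw [Fintype.linearIndependent_iff] at hind
    have hthis := hind (fun a => x (f.symm ⟨i0, a⟩)) hcontra (f j0).2
    have heq : (⟨i0, (f j0).2⟩ : (i : Fin k) × {a : Fin m // a ∈ A i}) = f j0 := Sigma.eta _
    rw [heq, Equiv.symm_apply_apply] at hthis
    exact hj0 hthis
  · -- weight spectrum
    ext w
    simp only [weightSpectrum, Set.mem_setOf_eq, Set.mem_Icc]
    constructor
    · rintro ⟨c, hcC, hc0, rfl⟩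
      refine ⟨rankWeight_pos hc0, ?_⟩
      rw [← hdeg]
      exact rankWeight_le c
    · rintro ⟨hw1, hw2⟩
      obtain ⟨S, hS⟩ := hcov w hw1 hw2
      set U : Finset (Fin m) := S.biUnion A with hU
      set c : Fin n → L := ∑ i ∈ S, g i with hc
      have hSne : S.Nonempty := by
        rcases S.eq_empty_or_nonempty with rfl | h
        · simp [hU] at hS; omega
        · exact h
      have hc_entry : ∀ j, c j = if (f j).1 ∈ S then e (f j).2.val else 0 := by
        intro j
        rw [hc, Finset.sum_apply]
        have : ∀ i ∈ S, g i j = if (f j).1 = i then e (f j).2.val else 0 := fun i _ => rfl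
        rw [Finset.sum_congr rfl this, Finset.sum_ite_eq]
      refine ⟨c, ?_, ?_, ?_⟩
      · exact Submodule.sum_mem _ fun i _ => Submodule.subset_span (Set.mem_range_self i)
      · obtain ⟨i0, hi0⟩ := hSne
        obtain ⟨a0, ha0⟩ := hne i0
        intro h0
        have := congrFun h0 (f.symm ⟨i0, ⟨a0, ha0⟩⟩)
        rw [hc_entry] at this
        rw [f.apply_symm_apply] at this
        rw [if_pos hi0] at this
        exact e.ne_zero a0 (by simpa using this)
      · -- rank weight equals w
        have hspan : Submodule.span K (Set.range c) = Submodule.span K (e '' ↑U) := by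
          apply le_antisymm
          · rw [Submodule.span_le]
            rintro y ⟨j, rfl⟩
            rw [hc_entry j]
            by_cases h : (f j).1 ∈ S
            · rw [if_pos h]
              refine Submodule.subset_span ⟨(f j).2.val, ?_, rfl⟩
              rw [hU]
              exact_mod_cast Finset.mem_biUnion.mpr ⟨(f j).1, h, (f j).2.property⟩
            · rw [if_neg h]
              exact Submodule.zero_mem _
          · rw [Submodule.span_le]
            rintro y ⟨u, hu, rfl⟩
            have hu' : u ∈ U := by exact_mod_cast hu
            obtain ⟨i, hiS, hui⟩ := Finset.mem_biUnion.mp hu'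
            refine Submodule.subset_span ⟨f.symm ⟨i, ⟨u, hui⟩⟩, ?_⟩
            rw [hc_entry, f.apply_symm_apply, if_pos hiS]
        have hind : LinearIndependent K (fun a : ↥(↑U : Set (Fin m)) => e a.val) :=
          e.linearIndependent.comp _ Subtype.val_injective
        have hrange : Set.range (fun a : ↥(↑U : Set (Fin m)) => e a.val) = e '' ↑U := by
          ext y
          constructor
          · rintro ⟨a, rfl⟩; exact ⟨a.val, a.property, rfl⟩
          · rintro ⟨u, hu, rfl⟩; exact ⟨⟨u, hu⟩, rfl⟩
        have hcard2 : Fintype.card ↥(↑U : Set (Fin m)) = U.card := by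
          rw [← Set.toFinset_card, Finset.toFinset_coe]
        rw [rankWeight, hspan, ← hrange, finrank_span_eq_card hind, hcard2, hS]

end Construction

section Necessity

variable {K L : Type*} [Field K] [Field L] [Algebra K L]

lemma nondeg_bound [FiniteDimensional K L] {n : ℕ} {ι : Type*} [Fintype ι]
    {C : Submodule L (Fin n → L)} (v : ι → Fin n → L)
    (hsp : C ≤ Submodule.span L (Set.range v)) (hnd : IsNondegenerate K C) :
    n ≤ ∑ i, rankWeight K (v i) := by
  classical
  set ψ : ι → (Fin n → K) →ₗ[K] L :=
    fun i => ∑ j, (LinearMap.proj j).smulRight (v i j) with hψ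
  have hψ_apply : ∀ i x, ψ i x = ∑ j, x j • v i j := by
    intro i x
    rw [hψ]
    simp [LinearMap.sum_apply, LinearMap.smulRight_apply]
  have hψ_mem : ∀ i x, ψ i x ∈ Submodule.span K (Set.range (v i)) := by
    intro i x
    rw [hψ_apply]
    exact Submodule.sum_mem _ fun j _ =>
      Submodule.smul_mem _ _ (Submodule.subset_span (Set.mem_range_self j))
  set φ : (Fin n → K) →ₗ[K] (∀ i, ↥(Submodule.span K (Set.range (v i)))) :=
    LinearMap.pi (fun i => (ψ i).codRestrict _ (hψ_mem i)) with hφ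
  have hinj : Function.Injective φ := by
    rw [← LinearMap.ker_eq_bot, LinearMap.ker_eq_bot']
    intro x hx
    by_contra hx0
    obtain ⟨c, hcC, hcne⟩ := hnd x hx0
    have hcmem := hsp hcC
    rw [Submodule.mem_span_range_iff_exists_fun L] at hcmem
    obtain ⟨lam, rfl⟩ := hcmem
    have hcomp : ∀ i, ψ i x = 0 := by
      intro i
      have := congrFun hx i
      rw [hφ] at this
      simpa [LinearMap.pi_apply, Subtype.ext_iff, LinearMap.codRestrict_apply] using this
    apply hcne
    calc ∑ j, x j • (∑ i, lam i • v i) j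
        = ∑ j, ∑ i, x j • (lam i • v i j) := by
          refine Finset.sum_congr rfl fun j _ => ?_
          rw [Finset.sum_apply]
          rw [Finset.smul_sum]
          rfl
      _ = ∑ i, ∑ j, x j • (lam i • v i j) := Finset.sum_comm
      _ = ∑ i, lam i • (∑ j, x j • v i j) := by
          refine Finset.sum_congr rfl fun i _ => ?_
          rw [Finset.smul_sum]
          refine Finset.sum_congr rfl fun j _ => ?_
          rw [smul_comm]
      _ = ∑ i, lam i • ψ i x := by
          refine Finset.sum_congr rfl fun i _ => ?_
          rw [hψ_apply]
      _ = 0 := by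
          rw [Finset.sum_congr rfl (fun i _ => by rw [hcomp i, smul_zero])]
          exact Finset.sum_const_zero
  have h1 : Module.finrank K (Fin n → K) = n := by
    rw [Module.finrank_pi]
    exact Fintype.card_fin n
  have h2 : Module.finrank K (∀ i, ↥(Submodule.span K (Set.range (v i))))
      = ∑ i, rankWeight K (v i) := by
    rw [Module.finrank_pi_fintype]
    rfl
  have h3 := LinearMap.finrank_le_finrank_of_injective hinj
  omega

lemma greedy [FiniteDimensional K L] {n m : ℕ} (hdeg : Module.finrank K L = m)
    (C : Submodule L (Fin n → L)) (hws : weightSpectrum K C = Set.Icc 1 m) :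
    ∀ j : ℕ, 2 ^ j ≤ 2 * m → ∃ b : Fin j → (Fin n → L),
      (∀ i, b i ∈ C) ∧ LinearIndependent L b ∧ ∑ i, rankWeight K (b i) = 2 ^ j - 1 := by
  intro j
  induction j with
  | zero =>
    intro _
    exact ⟨Fin.elim0, fun i => i.elim0, linearIndependent_empty_type, by simp⟩
  | succ j ih =>
    intro hj
    have h2j : 2 ^ (j+1) = 2 ^ j * 2 := pow_succ 2 j
    have hjm : 2 ^ j ≤ m := by omega
    obtain ⟨b, hbC, hbind, hbsum⟩ := ih (by omega)
    have h1 : (1:ℕ) ≤ 2 ^ j := Nat.one_le_two_pow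
    have hmem : (2 ^ j : ℕ) ∈ weightSpectrum K C := by
      rw [hws]
      exact Set.mem_Icc.mpr ⟨h1, hjm⟩
    obtain ⟨c, hcC, hcne, hcw⟩ := hmem
    have hcnotmem : c ∉ Submodule.span L (Set.range b) := by
      intro hmem2
      have := rankWeight_mem_span_le (K := K) hmem2
      omega
    refine ⟨Fin.snoc b c, ?_, ?_, ?_⟩
    · intro i
      refine Fin.lastCases ?_ (fun i' => ?_) i
      · rw [Fin.snoc_last]; exact hcC
      · rw [Fin.snoc_castSucc]; exact hbC i'
    · exact linearIndependent_fin_snoc.mpr ⟨hbind, hcnotmem⟩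
    · rw [Fin.sum_univ_castSucc]
      have hcast : ∀ i : Fin j,
          rankWeight K ((Fin.snoc b c : Fin (j+1) → Fin n → L) (Fin.castSucc i))
          = rankWeight K (b i) := by
        intro i
        rw [Fin.snoc_castSucc]
      rw [Finset.sum_congr rfl (fun i _ => hcast i), hbsum, Fin.snoc_last, hcw]
      omega

lemma necessity {m n k : ℕ} (hdeg : Module.finrank K L = m) (hm : 1 ≤ m)
    (C : Submodule L (Fin n → L)) (hk : Module.finrank L ↥C = k)
    (hnd : IsNondegenerate K C) (hws : weightSpectrum K C = Set.Icc 1 m) :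
    Nat.log 2 m + 1 ≤ k ∧
      n ≤ (k - (Nat.log 2 m + 1)) * m + (2 ^ (Nat.log 2 m + 1) - 1) := by
  classical
  haveI : FiniteDimensional K L := Module.finite_of_finrank_pos (by omega)
  set r : ℕ := Nat.log 2 m + 1 with hr
  have hr1 : 2 ^ (r - 1) ≤ m := by
    simpa [hr] using Nat.pow_log_le_self 2 (by omega : m ≠ 0)
  have hr2 : m < 2 ^ r := by
    simpa [hr] using Nat.lt_pow_succ_log_self (by norm_num) m
  have hrpow : 2 ^ r = 2 ^ (r-1) * 2 := by
    have h := pow_succ 2 (r-1)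
    have he : r - 1 + 1 = r := by omega
    rw [he] at h
    exact h
  obtain ⟨b, hbC, hbind, hbsum⟩ := greedy hdeg C hws r (by omega)
  set b' : Fin r → ↥C := fun i => ⟨b i, hbC i⟩ with hb'
  have hbind' : LinearIndependent L b' := by
    apply LinearIndependent.of_comp C.subtype
    convert hbind
    rfl
  have hrk : r ≤ k := by
    have := hbind'.fintype_card_le_finrank
    rwa [Fintype.card_fin, hk] at this
  -- extend to a basis of C
  set s : Set ↥C := Set.range b' with hs
  have hsind : LinearIndepOn L id s := (linearIndepOn_id_range_iff hbind'.injective).mpr hbind'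
  set t : Set ↥C := hsind.extend (Set.subset_univ s) with htdef
  have hst : s ⊆ t := hsind.subset_extend _
  set B : Module.Basis ↥t L ↥C := Module.Basis.extend hsind with hB
  haveI : Fintype ↥t := FiniteDimensional.fintypeBasisIndex B
  have hcardt : Fintype.card ↥t = k := by
    rw [← hk]
    exact (Module.finrank_eq_card_basis B).symm
  -- spanning property in the ambient space
  set v : ↥t → (Fin n → L) := fun x => ((x : ↥C) : Fin n → L) with hv
  have hsp : C ≤ Submodule.span L (Set.range v) := by
    intro c hc
    have hmem : (⟨c, hc⟩ : ↥C) ∈ Submodule.span L (Set.range B) := by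
      rw [B.span_eq]
      trivial
    have hmap : c ∈ Submodule.map C.subtype (Submodule.span L (Set.range B)) :=
      ⟨⟨c, hc⟩, hmem, rfl⟩
    rw [Submodule.map_span] at hmap
    have himg : C.subtype '' Set.range B = Set.range v := by
      ext y
      constructor
      · rintro ⟨z, ⟨x, rfl⟩, rfl⟩
        exact ⟨x, congrArg C.subtype (Module.Basis.extend_apply_self hsind x).symm⟩
      · rintro ⟨x, rfl⟩
        exact ⟨B x, ⟨x, rfl⟩, congrArg C.subtype (Module.Basis.extend_apply_self hsind x)⟩
    rwa [himg] at hmap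
  have hbound := nondeg_bound v hsp hnd
  -- estimate the sum of the weights
  have hsum_split : ∑ x : ↥t, rankWeight K (v x)
      = ∑ y ∈ t.toFinset, rankWeight K ((y : ↥C) : Fin n → L) :=
    Finset.sum_set_coe (s := t) (f := fun y : ↥C => rankWeight K ((y : ↥C) : Fin n → L))
  have hsubF : s.toFinset ⊆ t.toFinset := Set.toFinset_subset_toFinset.mpr hst
  have hsum_sdiff : ∑ y ∈ t.toFinset \ s.toFinset, rankWeight K ((y : ↥C) : Fin n → L)
      + ∑ y ∈ s.toFinset, rankWeight K ((y : ↥C) : Fin n → L)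
      = ∑ y ∈ t.toFinset, rankWeight K ((y : ↥C) : Fin n → L) :=
    Finset.sum_sdiff hsubF
  have hb'inj : Function.Injective b' := hbind'.injective
  have hsF : s.toFinset = Finset.image b' Finset.univ := by
    ext y; simp [hs]
  have hsum_s : ∑ y ∈ s.toFinset, rankWeight K ((y : ↥C) : Fin n → L) = 2 ^ r - 1 := by
    rw [hsF]
    rw [Finset.sum_image (fun a _ c _ h => hb'inj h)]
    exact hbsum
  have hcard_s : s.toFinset.card = r := by
    rw [hsF]
    rw [Finset.card_image_of_injective _ hb'inj, Finset.card_univ, Fintype.card_fin]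
  have hcard_t : t.toFinset.card = k := by
    rw [Set.toFinset_card, hcardt]
  have hwle : ∀ y ∈ t.toFinset \ s.toFinset, rankWeight K ((y : ↥C) : Fin n → L) ≤ m := by
    intro y _
    rw [← hdeg]
    exact rankWeight_le _
  have hsum_rest : ∑ y ∈ t.toFinset \ s.toFinset, rankWeight K ((y : ↥C) : Fin n → L)
      ≤ (k - r) * m := by
    calc ∑ y ∈ t.toFinset \ s.toFinset, rankWeight K ((y : ↥C) : Fin n → L)
        ≤ (t.toFinset \ s.toFinset).card * m := by
          classical
          simpa using Finset.sum_le_card_nsmul _ _ m hwle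
      _ = (k - r) * m := by
          rw [Finset.card_sdiff_of_subset hsubF, hcard_s, hcard_t]
  refine ⟨hrk, ?_⟩
  omega

end Necessity

/-- Characterization of full weight spectrum codes, case n > m: a nondegenerate FWS
[n,k]_{q^m/q} code (one with weight spectrum {1,…,m}) exists if and only if a < 2^{t+2},
where t = ⌊(km−n)/m⌋ and a = n − (k−t−2)m. -/
theorem exists_FWS_iff_of_gt (q m n k t a : ℕ) (hq : IsPrimePow q)
    (hk : 1 < k) (hkn : k < n) (hmn : m < n) (hkm : n ≤ k * m)
    (ht : t = (k * m - n) / m) (ha : a = n - (k - t - 2) * m)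
    (K L : Type) [Field K] [Fintype K] [Field L] [Algebra K L]
    (hcard : Fintype.card K = q) (hdeg : Module.finrank K L = m) :
    (∃ C : Submodule L (Fin n → L), Module.finrank L C = k ∧ IsNondegenerate K C ∧
        weightSpectrum K C = Set.Icc 1 m) ↔ a < 2 ^ (t + 2) := by
  have hm2 : 2 ≤ m := by
    by_contra h
    push_neg at h
    interval_cases m
    · simp at hkm; omega
    · omega
  have hr1 : 2 ^ (Nat.log 2 m + 1 - 1) ≤ m := by
    simpa using Nat.pow_log_le_self 2 (by omega : m ≠ 0)
  have hr2 : m < 2 ^ (Nat.log 2 m + 1) := by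
    simpa using Nat.lt_pow_succ_log_self (by norm_num) m
  rw [arith_iff m n k t a hk hkn hmn hkm ht ha]
  constructor
  · rintro ⟨C, hfin, hnd, hws⟩
    exact necessity hdeg (by omega) C hfin hnd hws
  · rintro ⟨hrk, hub⟩
    obtain ⟨A, hne, hsum, hcov⟩ := design_master (Nat.log 2 m + 1) m hm2 hr1 hr2 k n
      hrk (le_of_lt hkn) (le_of_lt hmn) hub
    exact construction hdeg (by omega) (by omega) A hne hsum hcov
end

section
/- Let q be a prime power, F_q ⊆ F_{q^m} a degree-m extension of finite fields, and ℓ ≥ 1. Let W be an F_q-subspace of F_{q^m}² with dim_{F_q}(W) = 2ℓ. Assume there exist three nonzero elements y₁, y₂, y₃ ∈ W such that no two of them are F_{q^m}-proportional (i.e., the F_{q^m}-lines ⟨y₁⟩_{F_{q^m}}, ⟨y₂⟩_{F_{q^m}}, ⟨y₃⟩_{F_{q^m}} are pairwise distinct) and dim_{F_q}(W ∩ ⟨y_i⟩_{F_{q^m}}) = ℓ for i = 1, 2, 3. Then there exist an invertible F_{q^m}-linear map A : F_{q^m}² → F_{q^m}² and an F_q-subspace S of F_{q^m} with dim_{F_q}(S)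 = ℓ such that the image of W under A equals S × S. -/
open Module Submodule

/-- The comap of `W` under `c ↦ c • z` is `K`-equivalent to `W ⊓ span L {z}`. -/
private noncomputable def lineComapEquiv {K L : Type} [Field K] [Field L] [Algebra K L]
    (W : Submodule K (Fin 2 → L)) (z : Fin 2 → L) (hz : z ≠ 0) :
    (W.comap ((LinearMap.toSpanSingleton L (Fin 2 → L) z).restrictScalars K)) ≃ₗ[K]
      (W ⊓ (Submodule.span L {z}).restrictScalars K : Submodule K (Fin 2 → L)) := by
  set g := (LinearMap.toSpanSingleton L (Fin 2 → L) z).restrictScalars K with hg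
  refine LinearEquiv.ofBijective
    (g.restrict (p := W.comap g)
      (q := W ⊓ (Submodule.span L {z}).restrictScalars K) ?_) ⟨?_, ?_⟩
  · intro x hx
    refine Submodule.mem_inf.2 ⟨hx, ?_⟩
    simp [hg, LinearMap.toSpanSingleton_apply, Submodule.mem_span_singleton]
  · intro ⟨c, hc⟩ ⟨d, hd⟩ h
    have : c • z = d • z := by
      simpa [hg, LinearMap.restrict_apply, LinearMap.toSpanSingleton_apply, Subtype.ext_iff]
        using h
    have := sub_smul c d z ▸ sub_eq_zero_of_eq this
    ext
    exact sub_eq_zero.1 (by simpa [hz] using smul_eq_zero.1 this)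
  · rintro ⟨x, hx⟩
    obtain ⟨hxW, hxs⟩ := Submodule.mem_inf.1 hx
    obtain ⟨c, rfl⟩ := Submodule.mem_span_singleton.1 hxs
    refine ⟨⟨c, ?_⟩, ?_⟩
    · simpa [hg, LinearMap.toSpanSingleton_apply] using hxW
    · ext
      simp [hg, LinearMap.restrict_apply, LinearMap.toSpanSingleton_apply]



/-- If W is an F_q-subspace of F_{q^m}² of dimension 2ℓ containing three pairwise
non-proportional nonzero vectors y₁, y₂, y₃ with dim_{F_q}(W ∩ ⟨y_i⟩_{F_{q^m}}) = ℓ, then W is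
GL(2,q^m)-equivalent to S × S for some F_q-subspace S of F_{q^m} with dim_{F_q} S = ℓ. -/
theorem subspace_equiv_prod (q m ℓ : ℕ) (hq : IsPrimePow q) (hℓ : 1 ≤ ℓ)
    (K L : Type) [Field K] [Fintype K] [Field L] [Algebra K L]
    (hcard : Fintype.card K = q) (hdeg : Module.finrank K L = m)
    (W : Submodule K (Fin 2 → L)) (hW : Module.finrank K W = 2 * ℓ)
    (y : Fin 3 → (Fin 2 → L)) (hy0 : ∀ i, y i ≠ 0) (hymem : ∀ i, y i ∈ W)
    (hdist : ∀ i j, i ≠ j →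
      (Submodule.span L {y i} : Submodule L (Fin 2 → L)) ≠ Submodule.span L {y j})
    (hint : ∀ i, Module.finrank K
      (W ⊓ (Submodule.span L {y i}).restrictScalars K : Submodule K (Fin 2 → L)) = ℓ) :
    ∃ (A : (Fin 2 → L) ≃ₗ[L] (Fin 2 → L)) (S : Submodule K L),
      Module.finrank K S = ℓ ∧
      (⇑A '' (W : Set (Fin 2 → L)) = {v : Fin 2 → L | v 0 ∈ S ∧ v 1 ∈ S}) := by
  classical
  -- spans of nonzero proportional vectors agree
  have span_eq : ∀ (u v : Fin 2 → L) (c : L), u ≠ 0 → c • v = u →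
      (Submodule.span L {u} : Submodule L (Fin 2 → L)) = Submodule.span L {v} := by
    intro u v c hu hcv
    have hc : c ≠ 0 := by rintro rfl; simp at hcv; exact hu hcv.symm
    rw [← hcv]
    exact Submodule.span_singleton_smul_eq (IsUnit.mk0 c hc) v
  -- y 0, y 1 are linearly independent over L
  have hli : LinearIndependent L ![y 0, y 1] := by
    rw [linearIndependent_fin2]
    refine ⟨by simpa using hy0 1, fun c hc => ?_⟩
    exact hdist 0 1 (by decide) (span_eq _ _ c (hy0 0) (by simpa using hc))
  -- basis from y0 y1
  have hfr : Fintype.card (Fin 2) = Module.finrank L (Fin 2 → L) := by simp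
  let B : Basis (Fin 2) L (Fin 2 → L) := basisOfLinearIndependentOfCardEqFinrank hli hfr
  have hB : ∀ i, B i = ![y 0, y 1] i := fun i => by
    rw [show B = basisOfLinearIndependentOfCardEqFinrank hli hfr from rfl,
      coe_basisOfLinearIndependentOfCardEqFinrank]
  have hB0 : B 0 = y 0 := by simpa using hB 0
  have hB1 : B 1 = y 1 := by simpa using hB 1
  -- coefficients of y2
  set a : L := B.repr (y 2) 0 with ha
  set b : L := B.repr (y 2) 1 with hb
  have hy2 : a • y 0 + b • y 1 = y 2 := by
    have := B.sum_repr (y 2)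
    rwa [Fin.sum_univ_two, hB0, hB1] at this
  have hane : a ≠ 0 := by
    rintro h
    rw [h, zero_smul, zero_add] at hy2
    exact hdist 2 1 (by decide) (span_eq _ _ b (hy0 2) hy2)
  have hbne : b ≠ 0 := by
    rintro h
    rw [h, zero_smul, add_zero] at hy2
    exact hdist 2 0 (by decide) (span_eq _ _ a (hy0 2) hy2)
  -- P, Q: intersections with the two lines
  set P : Submodule K (Fin 2 → L) := W ⊓ (Submodule.span L {y 0}).restrictScalars K with hP
  set Q : Submodule K (Fin 2 → L) := W ⊓ (Submodule.span L {y 1}).restrictScalars K with hQ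
  have hWfd : FiniteDimensional K W := by
    refine FiniteDimensional.of_finrank_pos ?_
    rw [hW]; omega
  have hPle : P ≤ W := inf_le_left
  have hQle : Q ≤ W := inf_le_left
  have hPfd : FiniteDimensional K P := Submodule.finiteDimensional_of_le hPle
  have hQfd : FiniteDimensional K Q := Submodule.finiteDimensional_of_le hQle
  have hPQbot : P ⊓ Q = ⊥ := by
    rw [eq_bot_iff]
    rintro x ⟨⟨-, hx0⟩, ⟨-, hx1⟩⟩
    obtain ⟨c, rfl⟩ := Submodule.mem_span_singleton.1 hx0
    obtain ⟨d, hd⟩ := Submodule.mem_span_singleton.1 hx1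
    rcases eq_or_ne c 0 with rfl | hc
    · simp
    · have h1 : (Submodule.span L {c • y 0} : Submodule L (Fin 2 → L)) =
          Submodule.span L {y 1} := span_eq _ _ d (smul_ne_zero hc (hy0 0)) hd
      rw [Submodule.span_singleton_smul_eq (IsUnit.mk0 c hc)] at h1
      exact absurd h1 (hdist 0 1 (by decide))
  have hsup : P ⊔ Q = W := by
    have hle : P ⊔ Q ≤ W := sup_le hPle hQle
    refine Submodule.eq_of_le_of_finrank_le hle ?_
    have := Submodule.finrank_sup_add_finrank_inf_eq P Q
    rw [hPQbot] at this
    simp only [finrank_bot, add_zero] at this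
    rw [hW, this, hint 0, hint 1, two_mul]
  -- projection fact
  have hproj : ∀ u v : L, u • y 0 + v • y 1 ∈ W → u • y 0 ∈ W ∧ v • y 1 ∈ W := by
    intro u v huv
    rw [← hsup] at huv
    obtain ⟨p, hp, r, hr, hpr⟩ := Submodule.mem_sup.1 huv
    obtain ⟨c, rfl⟩ := Submodule.mem_span_singleton.1 hp.2
    obtain ⟨d, rfl⟩ := Submodule.mem_span_singleton.1 hr.2
    have key : (u - c) • y 0 + (v - d) • y 1 = 0 := by
      rw [sub_smul, sub_smul,
        show u • y 0 - c • y 0 + (v • y 1 - d • y 1)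
          = (u • y 0 + v • y 1) - (c • y 0 + d • y 1) by abel, ← hpr, sub_self]
    obtain ⟨h1, h2⟩ := LinearIndependent.pair_iff.1 (by simpa using hli) _ _ key
    have hu : u = c := sub_eq_zero.1 h1
    have hv : v = d := sub_eq_zero.1 h2
    exact ⟨hu ▸ hp.1, hv ▸ hr.1⟩
  -- the coefficient submodules
  set C : Fin 3 → Submodule K L := fun i =>
    W.comap ((LinearMap.toSpanSingleton L (Fin 2 → L) (y i)).restrictScalars K) with hC
  have hCmem : ∀ i (c : L), c ∈ C i ↔ c • y i ∈ W := by
    intro i c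
    simp [hC, LinearMap.toSpanSingleton_apply]
  have hCrank : ∀ i, Module.finrank K (C i) = ℓ := by
    intro i
    rw [LinearEquiv.finrank_eq (lineComapEquiv W (y i) (hy0 i)), hint i]
  have hCfd : ∀ i, FiniteDimensional K (C i) := by
    intro i
    have : FiniteDimensional K (W ⊓ (Submodule.span L {y i}).restrictScalars K :
        Submodule K (Fin 2 → L)) := Submodule.finiteDimensional_of_le inf_le_left
    exact (lineComapEquiv W (y i) (hy0 i)).symm.finiteDimensional
  -- multiplication equivalences
  have mulequiv : ∀ (c : L), c ≠ 0 → ∃ e : L ≃ₗ[K] L, ∀ x, e x = c * x := by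
    intro c hc
    refine ⟨LinearEquiv.ofBijective (LinearMap.mulLeft K c)
      ⟨fun x z h => ?_, fun x => ⟨c⁻¹ * x, by rw [LinearMap.mulLeft_apply, mul_inv_cancel_left₀ hc]⟩⟩, fun x => rfl⟩
    simpa [LinearMap.mulLeft_apply] using mul_left_cancel₀ hc h
  obtain ⟨ea, hea⟩ := mulequiv a hane
  obtain ⟨eb, heb⟩ := mulequiv b hbne
  -- C 0 = a • (C 2), C 1 = b • (C 2)
  -- decomposition of s • y 2
  have hdecomp : ∀ s : L, s • y 2 = (s * a) • y 0 + (s * b) • y 1 := by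
    intro s
    rw [← hy2, smul_add, smul_smul, smul_smul]
  have hC0 : C 0 = Submodule.map (ea : L →ₗ[K] L) (C 2) := by
    haveI := hCfd 0
    refine (Submodule.eq_of_le_of_finrank_le ?_ ?_).symm
    · rintro x ⟨s, hs, rfl⟩
      simp only [SetLike.mem_coe] at hs
      rw [hCmem 2, hdecomp s] at hs
      rw [LinearEquiv.coe_coe, hCmem 0, hea, mul_comm]
      exact (hproj _ _ hs).1
    · rw [LinearEquiv.finrank_map_eq, hCrank 0, hCrank 2]
  have hC1 : C 1 = Submodule.map (eb : L →ₗ[K] L) (C 2) := by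
    haveI := hCfd 1
    refine (Submodule.eq_of_le_of_finrank_le ?_ ?_).symm
    · rintro x ⟨s, hs, rfl⟩
      simp only [SetLike.mem_coe] at hs
      rw [hCmem 2, hdecomp s] at hs
      rw [LinearEquiv.coe_coe, hCmem 1, heb, mul_comm]
      exact (hproj _ _ hs).2
    · rw [LinearEquiv.finrank_map_eq, hCrank 1, hCrank 2]
  -- the target basis and the equivalence A
  set e0 : Fin 2 → L := Pi.single 0 1 with he0
  set e1 : Fin 2 → L := Pi.single 1 1 with he1
  let ua : Lˣ := Units.mk0 a⁻¹ (inv_ne_zero hane)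
  let ub : Lˣ := Units.mk0 b⁻¹ (inv_ne_zero hbne)
  let B' : Basis (Fin 2) L (Fin 2 → L) := (Pi.basisFun L (Fin 2)).unitsSMul ![ua, ub]
  let A : (Fin 2 → L) ≃ₗ[L] (Fin 2 → L) := B.equiv B' (Equiv.refl _)
  have hA0 : A (y 0) = a⁻¹ • e0 := by
    rw [← hB0]
    show B.equiv B' (Equiv.refl _) (B 0) = a⁻¹ • e0
    rw [Basis.equiv_apply]
    simp [B', Basis.unitsSMul_apply, ua, Units.smul_def, he0, Pi.basisFun_apply]
  have hA1 : A (y 1) = b⁻¹ • e1 := by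
    rw [← hB1]
    show B.equiv B' (Equiv.refl _) (B 1) = b⁻¹ • e1
    rw [Basis.equiv_apply]
    simp [B', Basis.unitsSMul_apply, ub, Units.smul_def, he1, Pi.basisFun_apply]
  refine ⟨A, C 2, hCrank 2, ?_⟩
  ext v
  simp only [Set.mem_image, Set.mem_setOf_eq, SetLike.mem_coe]
  constructor
  · rintro ⟨w, hw, rfl⟩
    set u := B.repr w 0 with hu'
    set t := B.repr w 1 with ht'
    have hwdec : u • y 0 + t • y 1 = w := by
      have := B.sum_repr w
      rwa [Fin.sum_univ_two, hB0, hB1] at this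
    obtain ⟨h0, h1⟩ := hproj u t (by rw [hwdec]; exact hw)
    have hu : a⁻¹ * u ∈ C 2 := by
      have hmem : u ∈ C 0 := (hCmem 0 u).2 h0
      rw [hC0] at hmem
      obtain ⟨s, hs, hsu⟩ := hmem
      simp only [SetLike.mem_coe] at hs
      rw [LinearEquiv.coe_coe, hea] at hsu
      rw [← hsu]
      rwa [show a⁻¹ * (a * s) = s by field_simp]
    have ht : b⁻¹ * t ∈ C 2 := by
      have hmem : t ∈ C 1 := (hCmem 1 t).2 h1
      rw [hC1] at hmem
      obtain ⟨s, hs, hsu⟩ := hmem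
      simp only [SetLike.mem_coe] at hs
      rw [LinearEquiv.coe_coe, heb] at hsu
      rw [← hsu]
      rwa [show b⁻¹ * (b * s) = s by field_simp]
    have hAw : A w = u • (a⁻¹ • e0) + t • (b⁻¹ • e1) := by
      rw [← hwdec, map_add, map_smul, map_smul, hA0, hA1]
    refine ⟨?_, ?_⟩
    · have hval : A w 0 = a⁻¹ * u := by
        rw [hAw]
        simp [he0, he1, mul_comm]
      rw [hval]; exact hu
    · have hval : A w 1 = b⁻¹ * t := by
        rw [hAw]
        simp [he0, he1, mul_comm]
      rw [hval]; exact ht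
  · rintro ⟨h0, h1⟩
    refine ⟨(a * v 0) • y 0 + (b * v 1) • y 1, ?_, ?_⟩
    · apply W.add_mem
      · refine (hCmem 0 _).1 ?_
        rw [hC0]
        exact ⟨v 0, h0, by rw [LinearEquiv.coe_coe, hea]⟩
      · refine (hCmem 1 _).1 ?_
        rw [hC1]
        exact ⟨v 1, h1, by rw [LinearEquiv.coe_coe, heb]⟩
    · rw [map_add, map_smul, map_smul, hA0, hA1]
      funext j
      fin_cases j
      · simp [he0, he1]
        field_simp
      · simp [he0, he1]
        field_simp
end

section
/- Let q be a prime power and let k, n, m be integers with 1 < k < n, 5 ≤ n ≤ m. Set s = max{⌊n/2^{k−1}⌋, 1} and s⊥ = max{⌊n/2^{n−k−1}⌋, 1}. Let C be a nondegenerate [n,k]_{q^m/q} rank-metric code with |WS(C)| = n − s + 1 (i.e., C is L_rk-optimal). Then the dual code C⊥ is degenerate, or C⊥ is not L_rk-optimal, i.e., |WS(C⊥)| ≠ n − s⊥ + 1. -/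
lemma rankWeight_mem_Icc (K : Type*) [Field K] {L : Type*} [Field L] [Algebra K L]
    {n : ℕ} (c : Fin n → L) (hc : c ≠ 0) : rankWeight K c ∈ Set.Icc 1 n := by
  haveI : FiniteDimensional K (Submodule.span K (Set.range c)) :=
    FiniteDimensional.span_of_finite K (Set.finite_range c)
  constructor
  · rw [Nat.one_le_iff_ne_zero]
    intro h0
    obtain ⟨j, hj⟩ : ∃ j, c j ≠ 0 := by
      by_contra h; push_neg at h; exact hc (funext h)
    have hmem : c j ∈ Submodule.span K (Set.range c) :=
      Submodule.subset_span (Set.mem_range_self j)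
    have : Submodule.span K (Set.range c) = ⊥ :=
      Submodule.finrank_eq_zero.mp h0
    rw [this, Submodule.mem_bot] at hmem
    exact hj hmem
  · classical
    have := finrank_span_le_card (R := K) (Set.range c)
    refine le_trans this ?_
    rw [Set.toFinset_range]
    exact le_trans (Finset.card_image_le) (by simp)

lemma exists_gen_of_rankWeight_one (K : Type*) [Field K] {L : Type*} [Field L] [Algebra K L]
    {n : ℕ} (c : Fin n → L) (hc : c ≠ 0) (h1 : rankWeight K c = 1) :
    ∃ α : L, α ≠ 0 ∧ ∃ x : Fin n → K, x ≠ 0 ∧ ∀ j, c j = x j • α := by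
  haveI : FiniteDimensional K (Submodule.span K (Set.range c)) :=
    FiniteDimensional.span_of_finite K (Set.finite_range c)
  obtain ⟨j0, hj0⟩ : ∃ j, c j ≠ 0 := by
    by_contra h; push_neg at h; exact hc (funext h)
  refine ⟨c j0, hj0, ?_⟩
  have hle : Submodule.span K {c j0} ≤ Submodule.span K (Set.range c) :=
    Submodule.span_mono (by simp [Set.singleton_subset_iff])
  have heq : Submodule.span K {c j0} = Submodule.span K (Set.range c) := by
    apply Submodule.eq_of_le_of_finrank_le hle
    rw [finrank_span_singleton hj0]
    unfold rankWeight at h1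
    exact le_of_eq h1
  have hx : ∀ j, ∃ a : K, a • c j0 = c j := by
    intro j
    have : c j ∈ Submodule.span K {c j0} := by
      rw [heq]; exact Submodule.subset_span (Set.mem_range_self j)
    exact Submodule.mem_span_singleton.mp this
  choose x hxs using hx
  refine ⟨x, ?_, fun j => (hxs j).symm⟩
  intro hx0
  apply hc
  funext j
  rw [← hxs j, congrFun hx0 j]
  simp

lemma weightSpectrum_one_mem (K : Type*) [Field K] {L : Type*} [Field L] [Algebra K L]
    {n : ℕ} (C : Submodule L (Fin n → L)) (hn : 1 ≤ n)
    (h : (weightSpectrum K C).ncard = n) : 1 ∈ weightSpectrum K C := by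
  have hsub : weightSpectrum K C ⊆ Set.Icc 1 n := by
    rintro w ⟨c, _, hc, hw⟩
    exact hw ▸ rankWeight_mem_Icc K c hc
  have hIcc : (Set.Icc 1 n).ncard = n := by
    rw [← Nat.card_coe_set_eq, Nat.card_eq_card_toFinset]
    simp [Nat.card_Icc]
  have : weightSpectrum K C = Set.Icc 1 n :=
    Set.eq_of_subset_of_ncard_le hsub (by rw [hIcc, h]) (Set.finite_Icc 1 n)
  rw [this]
  exact Set.mem_Icc.mpr ⟨le_refl 1, hn⟩

lemma sum_smul_gen_mul (K : Type*) [Field K] {L : Type*} [Field L] [Algebra K L]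
    {n : ℕ} (x : Fin n → K) (α : L) (e : Fin n → L) :
    ∑ j, (x j • α) * e j = (∑ j, x j • e j) * α := by
  rw [Finset.sum_mul]
  refine Finset.sum_congr rfl fun j _ => ?_
  rw [smul_mul_assoc, smul_mul_assoc, mul_comm α (e j)]

lemma sq_lt_two_pow' (n : ℕ) (h : 5 ≤ n) : n * n < 2 ^ n := by
  induction n, h using Nat.le_induction with
  | base => norm_num
  | succ n hn ih =>
    have h2 : 2 ^ (n + 1) = 2 * 2 ^ n := by ring
    nlinarith

/-- Duality, case 5 ≤ n ≤ m: if C is a nondegenerate L_rk-optimal [n,k]_{q^m/q} code, then its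
dual code D = C⊥ is degenerate or not L_rk-optimal. -/
theorem dual_not_Lrk_optimal_of_le (q m n k : ℕ) (hq : IsPrimePow q)
    (hk : 1 < k) (hkn : k < n) (hn5 : 5 ≤ n) (hnm : n ≤ m)
    (K L : Type) [Field K] [Fintype K] [Field L] [Algebra K L]
    (hcard : Fintype.card K = q) (hdeg : Module.finrank K L = m)
    (C D : Submodule L (Fin n → L))
    (hdim : Module.finrank L C = k) (hnd : IsNondegenerate K C)
    (hD : ∀ d : Fin n → L, d ∈ D ↔ ∀ c ∈ C, (∑ j, c j * d j) = 0)
    (hopt : (weightSpectrum K C).ncard = n - max (n / 2 ^ (k - 1)) 1 + 1) :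
    ¬ IsNondegenerate K D ∨
      (weightSpectrum K D).ncard ≠ n - max (n / 2 ^ (n - k - 1)) 1 + 1 := by
  by_cases hcase : n / 2 ^ (n - k - 1) ≤ 1
  · -- the dual target number is n; show |WS(D)| = n is impossible
    right
    rw [max_eq_right hcase]
    have hn' : n - 1 + 1 = n := by omega
    rw [hn']
    intro heq
    obtain ⟨d, hdD, hd0, hw⟩ := weightSpectrum_one_mem K D (by omega) heq
    obtain ⟨α, hα, x, hx0, hxs⟩ := exists_gen_of_rankWeight_one K d hd0 hw
    obtain ⟨c, hcC, hsum⟩ := hnd x hx0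
    have h0 : ∑ j, c j * d j = 0 := (hD d).mp hdD c hcC
    have : (∑ j, x j • c j) * α = 0 := by
      rw [← sum_smul_gen_mul K x α c, ← h0]
      refine Finset.sum_congr rfl fun j _ => ?_
      rw [hxs j, mul_comm]
    rcases mul_eq_zero.mp this with h | h
    · exact hsum h
    · exact hα h
  · -- then n / 2 ^ (k - 1) ≤ 1, so |WS(C)| = n gives a weight-one word in C,
    -- hence D is degenerate
    left
    push_neg at hcase
    have hA : n / 2 ^ (k - 1) ≤ 1 := by
      by_contra hB
      push_neg at hB
      have h1 : 2 * 2 ^ (k - 1) ≤ n :=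
        (Nat.le_div_iff_mul_le (Nat.pow_pos (by norm_num))).mp hB |>.trans_eq'
          (by ring)
      have h2 : 2 * 2 ^ (n - k - 1) ≤ n :=
        (Nat.le_div_iff_mul_le (Nat.pow_pos (by norm_num))).mp hcase |>.trans_eq'
          (by ring)
      have e1 : 2 * 2 ^ (k - 1) = 2 ^ k := by
        rw [← pow_succ']
        congr 1
        omega
      have e2 : 2 * 2 ^ (n - k - 1) = 2 ^ (n - k) := by
        rw [← pow_succ']
        congr 1
        omega
      have hnn : 2 ^ n ≤ n * n := by
        calc 2 ^ n = 2 ^ k * 2 ^ (n - k) := by rw [← pow_add]; congr 1; omega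
        _ ≤ n * n := Nat.mul_le_mul (e1 ▸ h1) (e2 ▸ h2)
      exact absurd hnn (not_le.mpr (sq_lt_two_pow' n hn5))
    rw [max_eq_right hA] at hopt
    have hn' : n - 1 + 1 = n := by omega
    rw [hn'] at hopt
    obtain ⟨c, hcC, hc0, hw⟩ := weightSpectrum_one_mem K C (by omega) hopt
    obtain ⟨α, hα, x, hx0, hxs⟩ := exists_gen_of_rankWeight_one K c hc0 hw
    intro hndD
    obtain ⟨d, hdD, hsum⟩ := hndD x hx0
    have h0 : ∑ j, c j * d j = 0 := (hD d).mp hdD c hcC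
    have : (∑ j, x j • d j) * α = 0 := by
      rw [← sum_smul_gen_mul K x α d, ← h0]
      refine Finset.sum_congr rfl fun j _ => ?_
      rw [hxs j]
    rcases mul_eq_zero.mp this with h | h
    · exact hsum h
    · exact hα h
end
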